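/- Let a, b be coprime positive integers. The number of nonnegative integers that are not representable as a*x + b*y with x, y nonnegative integers equals (a-1)*(b-1)/2. -/

import Mathlib

open Nat

lemma rep_symm_aux {a b : ℕ} (cop : Nat.Coprime a b) (ha : 1 < a) (hb : 1 < b)
    (k : ℕ) (hk : ¬ ∃ x y : ℕ, a * x + b * y = k) :
    ∃ x y : ℕ, a * x + b * y + k = a * b - a - b := by
  haveI : NeZero b := ⟨by omega⟩
  set x : ℕ := ((k : ZMod b) * (a : ZMod b)⁻¹).val with hxdef
  have hxb : x < b := ZMod.val_lt _
  have hunit : IsUnit (a : ZMod b) := (ZMod.isUnit_iff_coprime a b).mpr cop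
  have hcast : ((a * x : ℕ) : ZMod b) = (k : ZMod b) := by
    push_cast
    rw [hxdef, ZMod.natCast_val, ZMod.cast_id]
    rw [show (a : ZMod b) * ((k : ZMod b) * (a : ZMod b)⁻¹)
        = (k : ZMod b) * ((a : ZMod b)⁻¹ * a) by ring, ZMod.inv_mul_of_unit _ hunit, mul_one]
  have hmod : a * x ≡ k [MOD b] := (ZMod.natCast_eq_natCast_iff _ _ _).mp hcast
  obtain ⟨y, hy⟩ : (b : ℤ) ∣ (k : ℤ) - (a * x : ℕ) := hmod.dvd
  rcases le_or_gt 0 y with hy0 | hy0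
  · exfalso
    apply hk
    refine ⟨x, y.toNat, ?_⟩
    have : ((a * x + b * y.toNat : ℕ) : ℤ) = (k : ℤ) := by
      push_cast [Int.toNat_of_nonneg hy0]
      omega
    exact_mod_cast this
  · refine ⟨b - 1 - x, (-1 - y).toNat, ?_⟩
    have hab : a + b ≤ a * b := add_le_mul ha hb
    have h1 : ((-1 - y).toNat : ℤ) = -1 - y := Int.toNat_of_nonneg (by omega)
    have hx'cast : ((b - 1 - x : ℕ) : ℤ) = (b : ℤ) - 1 - (x : ℤ) := by omega
    have hk' : (k : ℤ) = a * x + b * y := by push_cast at hy; omega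
    have key : ((a * (b - 1 - x) + b * (-1 - y).toNat + k : ℕ) : ℤ)
        = ((a * b - a - b : ℕ) : ℤ) := by
      rw [show a * b - a - b = a * b - (a + b) from Nat.sub_sub _ _ _, Nat.cast_sub hab, Nat.cast_add, Nat.cast_add, Nat.cast_mul,
        Nat.cast_mul, hx'cast, h1, Nat.cast_mul, Nat.cast_add]
      linear_combination hk'
    exact_mod_cast key

theorem stmt_13 (a b : ℕ) (ha : 0 < a) (hb : 0 < b) (h : Nat.gcd a b = 1) :
    Set.ncard {d : ℕ | ¬ ∃ x y : ℕ, a * x + b * y = d} = (a - 1) * (b - 1) / 2 := by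
  classical
  rcases eq_or_lt_of_le (Nat.succ_le_of_lt ha) with ha1 | ha'
  · subst ha1
    have : {d : ℕ | ¬ ∃ x y : ℕ, 1 * x + b * y = d} = ∅ := by
      ext d; simp only [Set.mem_setOf_eq, Set.mem_empty_iff_false, iff_false, not_not]
      exact ⟨d, 0, by omega⟩
    rw [show (Nat.succ 0) = 1 from rfl] at *
    rw [this, Set.ncard_empty]
    simp
  rcases eq_or_lt_of_le (Nat.succ_le_of_lt hb) with hb1 | hb'
  · subst hb1
    have : {d : ℕ | ¬ ∃ x y : ℕ, a * x + 1 * y = d} = ∅ := by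
      ext d; simp only [Set.mem_setOf_eq, Set.mem_empty_iff_false, iff_false, not_not]
      exact ⟨0, d, by omega⟩
    rw [show (Nat.succ 0) = 1 from rfl] at *
    rw [this, Set.ncard_empty]
    simp
  have cop : Nat.Coprime a b := h
  set N := a * b - a - b with hN
  have hF := frobeniusNumber_pair cop ha' hb'
  have hmem : ∀ d : ℕ, d ∈ AddSubmonoid.closure ({a, b} : Set ℕ) ↔ ∃ x y : ℕ, a * x + b * y = d := by
    intro d
    rw [AddSubmonoid.mem_closure_pair]
    constructor
    · rintro ⟨x, y, hxy⟩; exact ⟨x, y, by simpa [smul_eq_mul, mul_comm] using hxy⟩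
    · rintro ⟨x, y, hxy⟩; exact ⟨x, y, by simpa [smul_eq_mul, mul_comm] using hxy⟩
  have hNnot : ¬ ∃ x y : ℕ, a * x + b * y = N := by
    have := hF.1; rw [Set.mem_setOf_eq, hmem] at this; exact this
  have hub : ∀ d : ℕ, ¬ (∃ x y : ℕ, a * x + b * y = d) → d ≤ N := by
    intro d hd
    exact hF.2 (by rw [Set.mem_setOf_eq, hmem]; exact hd)
  set S : Finset ℕ := (Finset.range (N + 1)).filter (fun d => ¬ ∃ x y : ℕ, a * x + b * y = d) with hS
  set T : Finset ℕ := (Finset.range (N + 1)).filter (fun d => ∃ x y : ℕ, a * x + b * y = d) with hT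
  have hset : {d : ℕ | ¬ ∃ x y : ℕ, a * x + b * y = d} = ↑S := by
    ext d
    simp only [Set.mem_setOf_eq, hS, Finset.coe_filter, Finset.mem_range, Set.mem_setOf_eq]
    exact ⟨fun hd => ⟨Nat.lt_succ_of_le (hub d hd), hd⟩, fun hd => hd.2⟩
  rw [hset, Set.ncard_coe_finset]
  have hcards : T.card + S.card = N + 1 := by
    rw [hS, hT]
    rw [Finset.card_filter_add_card_filter_not]
    · exact Finset.card_range _
  have hbij : S.card = T.card := by
    apply Finset.card_bij (fun d _ => N - d)
    · intro d hd
      simp only [hS, Finset.mem_filter, Finset.mem_range] at hd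
      obtain ⟨x, y, hxy⟩ := rep_symm_aux cop ha' hb' d hd.2
      simp only [hT, Finset.mem_filter, Finset.mem_range]
      exact ⟨by omega, x, y, by omega⟩
    · intro d1 h1 d2 h2 heq
      simp only [hS, Finset.mem_filter, Finset.mem_range] at h1 h2
      omega
    · intro t ht
      simp only [hT, Finset.mem_filter, Finset.mem_range] at ht
      obtain ⟨hlt, x, y, hxy⟩ := ht
      refine ⟨N - t, ?_, by omega⟩
      simp only [hS, Finset.mem_filter, Finset.mem_range]
      refine ⟨by omega, ?_⟩
      rintro ⟨u, v, huv⟩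
      exact hNnot ⟨x + u, y + v, by rw [Nat.mul_add, Nat.mul_add]; omega⟩
  have hfact : (a - 1) * (b - 1) = N + 1 := by
    have hab : a + b ≤ a * b := add_le_mul ha' hb'
    rw [hN, Nat.sub_sub]
    zify [show 1 ≤ a by omega, show 1 ≤ b by omega, hab]
    ring
  omega
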